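/- Consider the double complex of the secondary Kodaira surface: A = Λ⟨φ1,φ2,φ̄1,φ̄2⟩ with ∂φ1 = -(1/2)φ1∧φ2, ∂̄φ1 = (1/2)φ1∧φ̄2, ∂φ2 = 0, ∂̄φ2 = (i/2)φ1∧φ̄1, and conjugate relations. Then h^{0,1}_∂̄ = 1 (generated by φ̄2) while h^{0,1}_BC = 0; in particular the natural map H^{0,1}_BC → H^{0,1}_∂̄ is not surjective. -/
import Mathlib


open Finset Module Complex

noncomputable section

/-- Index type: subsets of the 4 generators. Generators: 0 ↦ φ1, 1 ↦ φ2, 2 ↦ φ̄1, 3 ↦ φ̄2. -/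
abbrev ι : Type := Finset (Fin 4)

/-- The underlying 16-dimensional vector space of Λ⟨φ1,φ2,φ̄1,φ̄2⟩. -/
abbrev V : Type := ι → ℂ

/-- Basis vector corresponding to the wedge of the generators in `S` (in increasing order). -/
def e (S : ι) : V := fun T => if T = S then 1 else 0

/-- Structure constants of the exterior (wedge) product on basis elements. -/
def wedgeB (S T : ι) : V :=
  if Disjoint S T then
    ((-1 : ℂ) ^ (((S ×ˢ T).filter (fun x => x.2 < x.1)).card)) • e (S ∪ T)
  else 0

/-- The wedge product on `V`. -/
def mulV (v w : V) : V := ∑ S : ι, ∑ T : ι, (v S * w T) • wedgeB S T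

/-- The odd derivation determined by its values `g` on the generators. -/
def der (g : Fin 4 → V) : V →ₗ[ℂ] V :=
  (Pi.basisFun ℂ ι).constr ℂ (fun S =>
    ∑ i ∈ S, ((-1 : ℂ) ^ ((S.filter (fun j => j < i)).card)) •
      mulV (g i) (e (S.erase i)))

/-- Holomorphic degree of a basis index. -/
def pdeg (S : ι) : ℕ := (S ∩ ({0, 1} : Finset (Fin 4))).card

/-- Anti-holomorphic degree of a basis index. -/
def qdeg (S : ι) : ℕ := (S ∩ ({2, 3} : Finset (Fin 4))).card

/-- The bidegree-(p,q) component `A^{p,q}`. -/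
def Apq (p q : ℕ) : Submodule ℂ V :=
  Submodule.span ℂ ((fun S => e S) '' {S : ι | pdeg S = p ∧ qdeg S = q})

/-- The total-degree-k component `A^k`. -/
def Ak (k : ℕ) : Submodule ℂ V :=
  Submodule.span ℂ ((fun S => e S) '' {S : ι | S.card = k})

/-- Dimension of Dolbeault cohomology `H^{p,q}_∂̄ = ker ∂̄ / im ∂̄` in bidegree (p,q). -/
def hD (delbar : V →ₗ[ℂ] V) (p q : ℕ) : ℕ :=
  finrank ℂ (↥(Apq p q ⊓ LinearMap.ker delbar) ⧸
    Submodule.comap (Apq p q ⊓ LinearMap.ker delbar).subtype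
      (Submodule.map delbar (Apq p (q - 1))))

/-- Dimension of Bott-Chern cohomology `H^{p,q}_BC = (ker ∂ ∩ ker ∂̄)/im ∂∂̄` in bidegree (p,q). -/
def hBC (del delbar : V →ₗ[ℂ] V) (p q : ℕ) : ℕ :=
  finrank ℂ (↥(Apq p q ⊓ LinearMap.ker del ⊓ LinearMap.ker delbar) ⧸
    Submodule.comap (Apq p q ⊓ LinearMap.ker del ⊓ LinearMap.ker delbar).subtype
      (Submodule.map (del ∘ₗ delbar) (Apq (p - 1) (q - 1))))

/-- Dimension of Aeppli cohomology `H^{p,q}_A = ker ∂∂̄ / (im ∂ + im ∂̄)` in bidegree (p,q). -/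
def hA (del delbar : V →ₗ[ℂ] V) (p q : ℕ) : ℕ :=
  finrank ℂ (↥(Apq p q ⊓ LinearMap.ker (del ∘ₗ delbar)) ⧸
    Submodule.comap (Apq p q ⊓ LinearMap.ker (del ∘ₗ delbar)).subtype
      (Submodule.map del (Apq (p - 1) q) ⊔ Submodule.map delbar (Apq p (q - 1))))

/-- Dimension of the degree-k de Rham cohomology of the total complex with `d = ∂ + ∂̄`. -/
def betti (d : V →ₗ[ℂ] V) (k : ℕ) : ℕ :=
  finrank ℂ (↥(Ak k ⊓ LinearMap.ker d) ⧸
    Submodule.comap (Ak k ⊓ LinearMap.ker d).subtype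
      (Submodule.map d (Ak (k - 1))))

/-- The `∂` operator of the secondary Kodaira model: ∂φ1 = -(1/2)φ1∧φ2, ∂φ2 = 0,
∂φ̄1 = -(1/2)φ2∧φ̄1, ∂φ̄2 = -(i/2)φ1∧φ̄1 (conjugate relations). -/
def delSK : V →ₗ[ℂ] V :=
  der ![(-(1 : ℂ) / 2) • e {0, 1}, 0, (-(1 : ℂ) / 2) • e {1, 2},
        (-(Complex.I / 2)) • e {0, 2}]

/-- The `∂̄` operator of the secondary Kodaira model: ∂̄φ1 = (1/2)φ1∧φ̄2,
∂̄φ2 = (i/2)φ1∧φ̄1, ∂̄φ̄1 = -(1/2)φ̄1∧φ̄2, ∂̄φ̄2 = 0. -/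
def delbarSK : V →ₗ[ℂ] V :=
  der ![((1 : ℂ) / 2) • e {0, 3}, (Complex.I / 2) • e {0, 2},
        (-(1 : ℂ) / 2) • e {2, 3}, 0]

/-- The total differential of the secondary Kodaira complex. -/
def dSK : V →ₗ[ℂ] V := delSK + delbarSK

section Aux

lemma e_eq' (S : ι) : e S = Pi.basisFun ℂ ι S := by
  ext T; simp [e, Pi.basisFun_apply, Pi.single_apply, eq_comm]

lemma der_e (g : Fin 4 → V) (S : ι) :
    der g (e S) = ∑ i ∈ S, ((-1 : ℂ) ^ ((S.filter (fun j => j < i)).card)) •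
      mulV (g i) (e (S.erase i)) := by
  rw [e_eq', der, Basis.constr_basis]

lemma mulV_e (A B : ι) : mulV (e A) (e B) = wedgeB A B := by
  simp [mulV, e, ite_and]

lemma mulV_smul (c : ℂ) (v w : V) : mulV (c • v) w = c • mulV v w := by
  simp [mulV, Finset.smul_sum, smul_smul, mul_assoc]

lemma mulV_zero (w : V) : mulV 0 w = 0 := by simp [mulV]

lemma wedgeB_empty (S : ι) : wedgeB S ∅ = e S := by simp [wedgeB]

lemma delbar_e3 : delbarSK (e {3}) = 0 := by
  rw [delbarSK, der_e]; simp [mulV_zero]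

lemma delbar_e2 : delbarSK (e {2}) = (-(1:ℂ)/2) • e {2,3} := by
  rw [delbarSK, der_e]
  simp [mulV_smul, mulV_e, wedgeB_empty,
    show (Finset.filter (fun j : Fin 4 => j < 2) {2}).card = 0 from by decide]

lemma delbar_empty : delbarSK (e ∅) = 0 := by
  rw [delbarSK, der_e]; simp

lemma del_e3 : delSK (e {3}) = (-(Complex.I/2)) • e {0,2} := by
  rw [delSK, der_e]
  simp [← neg_smul, mulV_smul, mulV_e, wedgeB_empty,
    show (Finset.filter (fun j : Fin 4 => j < 3) {3}).card = 0 from by decide]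

lemma e3_ne : e ({3} : ι) ≠ 0 := fun h => by simpa [e] using congrFun h {3}

lemma A01_eq : Apq 0 1 = Submodule.span ℂ {e {2}, e {3}} := by
  rw [Apq]
  congr 1
  rw [show {S : ι | pdeg S = 0 ∧ qdeg S = 1} = ({{2}, {3}} : Set ι) from
    Set.ext (fun S => by revert S; decide)]
  simp [Set.image_insert_eq]

lemma A00_eq : Apq 0 0 = Submodule.span ℂ {e ∅} := by
  rw [Apq]
  congr 1
  rw [show {S : ι | pdeg S = 0 ∧ qdeg S = 0} = ({∅} : Set ι) from
    Set.ext (fun S => by revert S; decide)]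
  simp

lemma map_A00 : Submodule.map delbarSK (Apq 0 0) = ⊥ := by
  rw [A00_eq, Submodule.map_span, Set.image_singleton, delbar_empty,
    Submodule.span_zero_singleton]

lemma K_eq : Apq 0 1 ⊓ LinearMap.ker delbarSK = Submodule.span ℂ {e ({3} : ι)} := by
  apply le_antisymm
  · rintro v ⟨hv1, hv2⟩
    rw [A01_eq] at hv1
    obtain ⟨a, b, rfl⟩ := Submodule.mem_span_pair.mp hv1
    have h2 : delbarSK (a • e {2} + b • e {3}) = 0 := hv2
    rw [map_add, map_smul, map_smul, delbar_e2, delbar_e3, smul_zero, add_zero] at h2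
    have ha : a = 0 := by
      have := congrFun h2 {2, 3}
      simp [e] at this
      simpa using this
    rw [ha, zero_smul, zero_add]
    exact Submodule.mem_span_singleton.mpr ⟨b, rfl⟩
  · rw [Submodule.span_le, Set.singleton_subset_iff]
    exact ⟨A01_eq ▸ Submodule.subset_span (by simp), LinearMap.mem_ker.mpr delbar_e3⟩

lemma W_eq : Apq 0 1 ⊓ LinearMap.ker delSK ⊓ LinearMap.ker delbarSK = ⊥ := by
  rw [eq_bot_iff]
  rintro v ⟨⟨hv1, hdel⟩, hdelbar⟩
  have hv : v ∈ Apq 0 1 ⊓ LinearMap.ker delbarSK := ⟨hv1, hdelbar⟩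
  rw [K_eq] at hv
  obtain ⟨b, rfl⟩ := Submodule.mem_span_singleton.mp hv
  have h3 : delSK (b • e {3}) = 0 := hdel
  rw [map_smul, del_e3] at h3
  have hb : b = 0 := by
    have := congrFun h3 {0, 2}
    simp [e, Complex.ext_iff] at this
    simpa [Complex.ext_iff] using this
  simp [hb]

end Aux

/-- For the secondary Kodaira double complex: h^{0,1}_∂̄ = 1, generated by φ̄2, while
h^{0,1}_BC = 0; in particular the natural map H^{0,1}_BC → H^{0,1}_∂̄ (induced by the
identity, i.e. the inclusion ker∂∩ker∂̄ ⊆ ker∂̄ followed by the projection) is not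
surjective. -/

theorem secondary_kodaira_bc_to_dolbeault_not_surjective :
    hD delbarSK 0 1 = 1 ∧
    delbarSK (e {3}) = 0 ∧
    (Apq 0 1 ⊓ LinearMap.ker delbarSK =
      Submodule.map delbarSK (Apq 0 0) ⊔ Submodule.span ℂ {e ({3} : Finset (Fin 4))}) ∧
    hBC delSK delbarSK 0 1 = 0 ∧
    ¬ (Apq 0 1 ⊓ LinearMap.ker delbarSK ≤
        Submodule.map delbarSK (Apq 0 0) ⊔
          (Apq 0 1 ⊓ LinearMap.ker delSK ⊓ LinearMap.ker delbarSK)) := by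
  
  refine ⟨?_, delbar_e3, ?_, ?_, ?_⟩
  · unfold hD
    have hq : Submodule.comap (Apq 0 1 ⊓ LinearMap.ker delbarSK).subtype
        (Submodule.map delbarSK (Apq 0 (1 - 1))) = ⊥ := by
      rw [show Apq 0 (1 - 1) = Apq 0 0 from rfl, map_A00, Submodule.comap_bot,
        Submodule.ker_subtype]
    rw [LinearEquiv.finrank_eq (Submodule.quotEquivOfEqBot _ hq), K_eq]
    exact finrank_span_singleton e3_ne
  · rw [map_A00, bot_sup_eq]; exact K_eq
  · unfold hBC
    haveI hs : Subsingleton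
        ↥(Apq 0 1 ⊓ LinearMap.ker delSK ⊓ LinearMap.ker delbarSK) := by
      rw [W_eq]; infer_instance
    haveI : Subsingleton
        (↥(Apq 0 1 ⊓ LinearMap.ker delSK ⊓ LinearMap.ker delbarSK) ⧸
          Submodule.comap (Apq 0 1 ⊓ LinearMap.ker delSK ⊓ LinearMap.ker delbarSK).subtype
            (Submodule.map (delSK ∘ₗ delbarSK) (Apq (0 - 1) (1 - 1)))) := by
      constructor
      intro a b
      obtain ⟨x, rfl⟩ := Submodule.Quotient.mk_surjective _ a
      obtain ⟨y, rfl⟩ := Submodule.Quotient.mk_surjective _ b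
      exact congrArg _ (Subsingleton.elim x y)
    exact finrank_zero_of_subsingleton
  · intro hle
    have h3 : e ({3} : ι) ∈ Apq 0 1 ⊓ LinearMap.ker delbarSK := by
      rw [K_eq]; exact Submodule.mem_span_singleton_self _
    have := hle h3
    rw [map_A00, W_eq, bot_sup_eq, Submodule.mem_bot] at this
    exact e3_ne this
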